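/- The star-controlled GCID system with three components, alphabet V = T = {a, b, c, d}, axiom abcd in component C1, initial and final component C1, and rules r1.1: (1, (a, a, λ)_I, 2), r1.2: (1, (b, b, λ)_I, 3), r2.1: (2, (c, c, λ)_I, 1), r3.1: (3, (d, d, λ)_I, 1) generates exactly the cross-serial-dependency language { aⁿbᵐcⁿdᵐ : m, n ≥ 1 }; in particular this language belongs to GCID_S(3; 1, 1, 0; 0, 0, 0). -/

import Mathlib

/-!
Graph-controlled insertion-deletion (GCID) systems.

Symbols are drawn from the universal symbol set `ℕ`, strings are lists of
symbols.  A GCID system `Π = (k, V, T, A, H, i0, F, R)` has `k` components;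
rules `(i, r, j)` move a string from component `i` to component `j`, where
`r` is an insertion rule `(u, η, v)_I` (rewriting `uv → uηv`) or a deletion
rule `(u, δ, v)_D` (rewriting `uδv → uv`), with `u, v ∈ V*` and `η, δ ∈ V⁺`.
-/

namespace GCIDPaper

/-- Strings over the universal symbol set `ℕ`. -/
abbrev Word : Type := List ℕ

/-- An insertion rule `(u, s, v)_I` (when `isInsertion = true`) or a deletion
rule `(u, s, v)_D` (when `isInsertion = false`), with left context `lctx = u`,
inserted resp. deleted string `core = s`, and right context `rctx = v`. -/
structure InsDelRule : Type where
  isInsertion : Bool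
  lctx : Word
  core : Word
  rctx : Word
  deriving DecidableEq

/-- The insertion rule `(u, η, v)_I`. -/
def insRule (u η v : Word) : InsDelRule := ⟨true, u, η, v⟩

/-- The deletion rule `(u, δ, v)_D`. -/
def delRule (u δ v : Word) : InsDelRule := ⟨false, u, δ, v⟩

/-- Applying a rule to a string: the insertion rule `(u, η, v)_I` corresponds
to the rewriting `uv → uηv`, the deletion rule `(u, δ, v)_D` to `uδv → uv`. -/
def InsDelRule.Applies (r : InsDelRule) (w w' : Word) : Prop :=
  (r.isInsertion = true →
    ∃ x y, w = x ++ r.lctx ++ r.rctx ++ y ∧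
      w' = x ++ r.lctx ++ r.core ++ r.rctx ++ y) ∧
  (r.isInsertion = false →
    ∃ x y, w = x ++ r.lctx ++ r.core ++ r.rctx ++ y ∧
      w' = x ++ r.lctx ++ r.rctx ++ y)

/-- A graph-controlled insertion-deletion system.  The components are
numbered `1, …, k`; `i0` is the initial component, `F` the set of final
components, `axioms` the finite set of axioms (placed in component `i0`),
and `R` the finite set of rules `(i, r, j)`. -/
structure System : Type where
  k : ℕ
  V : Finset ℕ
  T : Finset ℕ
  axioms : Finset Word
  i0 : ℕ
  F : Finset ℕ
  R : Finset (ℕ × InsDelRule × ℕ)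
  k_pos : 1 ≤ k
  T_sub_V : T ⊆ V
  axioms_over_V : ∀ w ∈ axioms, ∀ a ∈ w, a ∈ V
  i0_mem : i0 ∈ Finset.Icc 1 k
  F_sub : F ⊆ Finset.Icc 1 k
  R_wf : ∀ q ∈ R, q.1 ∈ Finset.Icc 1 k ∧ q.2.2 ∈ Finset.Icc 1 k ∧
    q.2.1.core ≠ [] ∧ (∀ a ∈ q.2.1.lctx, a ∈ V) ∧
    (∀ a ∈ q.2.1.core, a ∈ V) ∧ (∀ a ∈ q.2.1.rctx, a ∈ V)

/-- One derivation step between configurations: `(w)_i ⇒ (w')_j` if some rule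
`(i, r, j)` of the system applied to `w` yields `w'`. -/
def Step (S : System) (c c' : Word × ℕ) : Prop :=
  ∃ q ∈ S.R, q.1 = c.2 ∧ q.2.2 = c'.2 ∧ q.2.1.Applies c.1 c'.1

/-- The reflexive-transitive closure `⇒*` of the step relation. -/
def Derives (S : System) : Word × ℕ → Word × ℕ → Prop :=
  Relation.ReflTransGen (Step S)

/-- The language generated:
`L(Π) = { w ∈ T* : (x)_{i0} ⇒* (w)_{i_f} for some axiom x and some i_f ∈ F }`. -/
def language (S : System) : Set Word :=
  { w | (∀ a ∈ w, a ∈ S.T) ∧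
    ∃ x ∈ S.axioms, ∃ f ∈ S.F, Derives S (x, S.i0) (w, f) }

/-- A single rule obeys the size bounds `(n, i', i''; m, j', j'')`. -/
def InsDelRule.SizeLE (r : InsDelRule) (n i' i'' m j' j'' : ℕ) : Prop :=
  (r.isInsertion = true →
    r.core.length ≤ n ∧ r.lctx.length ≤ i' ∧ r.rctx.length ≤ i'') ∧
  (r.isInsertion = false →
    r.core.length ≤ m ∧ r.lctx.length ≤ j' ∧ r.rctx.length ≤ j'')

/-- The system has size `(k; n, i', i''; m, j', j'')`. -/
def HasSize (S : System) (k n i' i'' m j' j'' : ℕ) : Prop :=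
  S.k = k ∧ ∀ q ∈ S.R, q.2.1.SizeLE n i' i'' m j' j''

/-- Star-controlled: the underlying undirected control graph (with an edge
`{Ci, Cj}` whenever there is a rule `(i, r, j)`) has exactly the edge set
`{ {C1, Ci} : 2 ≤ i ≤ k }`; in particular there are no loops. -/
def StarControlled (S : System) : Prop :=
  (∀ q ∈ S.R, ∃ i ∈ Finset.Icc 2 S.k, ({q.1, q.2.2} : Finset ℕ) = {1, i}) ∧
  (∀ i ∈ Finset.Icc 2 S.k, ∃ q ∈ S.R, ({q.1, q.2.2} : Finset ℕ) = {1, i})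

/-- The class `GCID(k; n, i', i''; m, j', j'')` of languages generated by GCID
systems of the given size. -/
def GCIDClass (k n i' i'' m j' j'' : ℕ) : Set (Set Word) :=
  { L | ∃ S : System, HasSize S k n i' i'' m j' j'' ∧ language S = L }

/-- The class `GCID_S(k; n, i', i''; m, j', j'')` of languages generated by
star-controlled GCID systems of the given size. -/
def GCID_S (k n i' i'' m j' j'' : ℕ) : Set (Set Word) :=
  { L | ∃ S : System, StarControlled S ∧ HasSize S k n i' i'' m j' j'' ∧
    language S = L }

/-- The star-controlled GCID system with three components, alphabet
`V = T = {a, b, c, d}` (encoded as `a = 0`, `b = 1`, `c = 2`, `d = 3`), axiom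
`abcd` in component `C1`, initial and final component `C1`, and rules
`r1.1 : (1, (a, a, λ)_I, 2)`, `r1.2 : (1, (b, b, λ)_I, 3)`,
`r2.1 : (2, (c, c, λ)_I, 1)`, `r3.1 : (3, (d, d, λ)_I, 1)`. -/
def crossSerialSystem : System where
  k := 3
  V := {0, 1, 2, 3}
  T := {0, 1, 2, 3}
  axioms := {[0, 1, 2, 3]}
  i0 := 1
  F := {1}
  R := {(1, insRule [0] [0] [], 2), (1, insRule [1] [1] [], 3),
        (2, insRule [2] [2] [], 1), (3, insRule [3] [3] [], 1)}
  k_pos := by decide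
  T_sub_V := by decide
  axioms_over_V := by decide
  i0_mem := by decide
  F_sub := by decide
  R_wf := by decide

/-- The cross-serial-dependency language `{ aⁿbᵐcⁿdᵐ : m, n ≥ 1 }`. -/
def crossSerialLang : Set Word :=
  { w | ∃ n m : ℕ, 1 ≤ n ∧ 1 ≤ m ∧
    w = List.replicate n 0 ++ List.replicate m 1 ++
        List.replicate n 2 ++ List.replicate m 3 }

/-- Inserting an extra copy of `s` next to an occurrence of `s` inside the
`s`-block of a word `u ++ sⁿ ++ t` (with `s ∉ u`, `s ∉ t`) extends the block. -/
lemma insert_mid (s : ℕ) :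
    ∀ (x u : Word) (n : ℕ) (t y : Word), s ∉ u → s ∉ t →
      x ++ s :: y = u ++ List.replicate n s ++ t →
      x ++ s :: s :: y = u ++ List.replicate (n + 1) s ++ t := by
  intro x
  induction x with
  | nil =>
      intro u n t y hu ht h
      cases u with
      | cons b u' =>
          simp only [List.nil_append, List.cons_append, List.cons.injEq] at h
          exact absurd (h.1 ▸ (List.mem_cons_self : b ∈ b :: u')) hu
      | nil =>
          cases n with
          | zero =>
              simp only [List.replicate, List.nil_append] at h
              exact absurd (h ▸ (List.mem_cons_self : s ∈ s :: y)) ht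
          | succ k =>
              simp only [List.replicate_succ, List.nil_append, List.cons_append,
                List.cons.injEq, true_and] at h ⊢
              simpa [List.replicate_succ] using h
  | cons a x' ih =>
      intro u n t y hu ht h
      cases u with
      | cons b u' =>
          simp only [List.cons_append, List.cons.injEq] at h ⊢
          refine ⟨h.1, ?_⟩
          have := ih u' n t y (fun hs => hu (List.mem_cons_of_mem b hs)) ht (by
            simpa using h.2)
          simpa using this
      | nil =>
          cases n with
          | zero =>
              simp only [List.replicate, List.nil_append] at h
              exact absurd (h ▸ (by simp : s ∈ (a :: x') ++ s :: y)) ht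
          | succ k =>
              simp only [List.replicate_succ, List.nil_append, List.cons_append,
                List.cons.injEq] at h ⊢
              refine ⟨h.1, ?_⟩
              have := ih [] k t y (by simp) ht (by simpa using h.2)
              simpa [List.replicate_succ] using this

/-- Canonical words at each component of `crossSerialSystem`. -/
def Inv (c : Word × ℕ) : Prop :=
  (c.2 = 1 ∧ ∃ n m : ℕ, c.1 = List.replicate (n+1) 0 ++ List.replicate (m+1) 1 ++
      List.replicate (n+1) 2 ++ List.replicate (m+1) 3) ∨
  (c.2 = 2 ∧ ∃ n m : ℕ, c.1 = List.replicate (n+2) 0 ++ List.replicate (m+1) 1 ++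
      List.replicate (n+1) 2 ++ List.replicate (m+1) 3) ∨
  (c.2 = 3 ∧ ∃ n m : ℕ, c.1 = List.replicate (n+1) 0 ++ List.replicate (m+2) 1 ++
      List.replicate (n+1) 2 ++ List.replicate (m+1) 3)

lemma inv_step {c c' : Word × ℕ} (hc : Inv c) (h : Step crossSerialSystem c c') :
    Inv c' := by
  obtain ⟨q, hq, h1, h2, happ⟩ := h
  have hq' : q = (1, insRule [0] [0] [], 2) ∨ q = (1, insRule [1] [1] [], 3) ∨
      q = (2, insRule [2] [2] [], 1) ∨ q = (3, insRule [3] [3] [], 1) := by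
    simpa [crossSerialSystem] using hq
  rcases hq' with rfl | rfl | rfl | rfl
  · -- r1.1 : insert a after a, C1 → C2
    obtain ⟨x, y, hw, hw'⟩ := happ.1 rfl
    simp only [insRule, List.append_assoc, List.cons_append, List.singleton_append,
      List.nil_append, List.append_nil] at hw hw' h1 h2
    rcases hc with ⟨hcomp, n, m, hform⟩ | ⟨hcomp, _⟩ | ⟨hcomp, _⟩
    · refine Or.inr (Or.inl ⟨h2.symm, n, m, ?_⟩)
      have key := insert_mid 0 x [] (n+1)
        (List.replicate (m+1) 1 ++ List.replicate (n+1) 2 ++ List.replicate (m+1) 3) y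
        (by simp) (by simp [List.mem_append, List.mem_replicate])
        (by rw [← hw, hform]; try simp [List.append_assoc])
      rw [hw', key]; try simp [List.append_assoc]
    · rw [hcomp] at h1; exact absurd h1.symm (by decide)
    · rw [hcomp] at h1; exact absurd h1.symm (by decide)
  · -- r1.2 : insert b after b, C1 → C3
    obtain ⟨x, y, hw, hw'⟩ := happ.1 rfl
    simp only [insRule, List.append_assoc, List.cons_append, List.singleton_append,
      List.nil_append, List.append_nil] at hw hw' h1 h2
    rcases hc with ⟨hcomp, n, m, hform⟩ | ⟨hcomp, _⟩ | ⟨hcomp, _⟩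
    · refine Or.inr (Or.inr ⟨h2.symm, n, m, ?_⟩)
      have key := insert_mid 1 x (List.replicate (n+1) 0) (m+1)
        (List.replicate (n+1) 2 ++ List.replicate (m+1) 3) y
        (by simp [List.mem_replicate]) (by simp [List.mem_append, List.mem_replicate])
        (by rw [← hw, hform]; try simp [List.append_assoc])
      rw [hw', key]; try simp [List.append_assoc]
    · rw [hcomp] at h1; exact absurd h1.symm (by decide)
    · rw [hcomp] at h1; exact absurd h1.symm (by decide)
  · -- r2.1 : insert c after c, C2 → C1
    obtain ⟨x, y, hw, hw'⟩ := happ.1 rfl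
    simp only [insRule, List.append_assoc, List.cons_append, List.singleton_append,
      List.nil_append, List.append_nil] at hw hw' h1 h2
    rcases hc with ⟨hcomp, _⟩ | ⟨hcomp, n, m, hform⟩ | ⟨hcomp, _⟩
    · rw [hcomp] at h1; exact absurd h1.symm (by decide)
    · refine Or.inl ⟨h2.symm, n+1, m, ?_⟩
      have key := insert_mid 2 x (List.replicate (n+2) 0 ++ List.replicate (m+1) 1) (n+1)
        (List.replicate (m+1) 3) y
        (by simp [List.mem_append, List.mem_replicate])
        (by simp [List.mem_replicate])
        (by rw [← hw, hform]; try simp [List.append_assoc])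
      rw [hw', key]; try simp [List.append_assoc]
    · rw [hcomp] at h1; exact absurd h1.symm (by decide)
  · -- r3.1 : insert d after d, C3 → C1
    obtain ⟨x, y, hw, hw'⟩ := happ.1 rfl
    simp only [insRule, List.append_assoc, List.cons_append, List.singleton_append,
      List.nil_append, List.append_nil] at hw hw' h1 h2
    rcases hc with ⟨hcomp, _⟩ | ⟨hcomp, _⟩ | ⟨hcomp, n, m, hform⟩
    · rw [hcomp] at h1; exact absurd h1.symm (by decide)
    · rw [hcomp] at h1; exact absurd h1.symm (by decide)
    · refine Or.inl ⟨h2.symm, n, m+1, ?_⟩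
      have key := insert_mid 3 x
        (List.replicate (n+1) 0 ++ List.replicate (m+2) 1 ++ List.replicate (n+1) 2)
        (m+1) [] y
        (by simp [List.mem_append, List.mem_replicate]) (by simp)
        (by rw [← hw, hform]; try simp [List.append_assoc])
      rw [hw', key]; try simp [List.append_assoc]

lemma inv_derives {c c' : Word × ℕ} (hc : Inv c)
    (h : Derives crossSerialSystem c c') : Inv c' := by
  induction h with
  | refl => exact hc
  | tail _ hstep ih => exact inv_step ih hstep

lemma rule_mem1 : (1, insRule [0] [0] [], 2) ∈ crossSerialSystem.R := by decide
lemma rule_mem2 : (1, insRule [1] [1] [], 3) ∈ crossSerialSystem.R := by decide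
lemma rule_mem3 : (2, insRule [2] [2] [], 1) ∈ crossSerialSystem.R := by decide
lemma rule_mem4 : (3, insRule [3] [3] [], 1) ∈ crossSerialSystem.R := by decide

/-- Canonical word of shape `aⁿ⁺¹bᵐ⁺¹cⁿ⁺¹dᵐ⁺¹`. -/
def form (n m : ℕ) : Word :=
  List.replicate (n+1) 0 ++ List.replicate (m+1) 1 ++
    List.replicate (n+1) 2 ++ List.replicate (m+1) 3

def aform (n m : ℕ) : Word :=
  List.replicate (n+2) 0 ++ List.replicate (m+1) 1 ++
    List.replicate (n+1) 2 ++ List.replicate (m+1) 3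

def bform (n m : ℕ) : Word :=
  List.replicate (n+1) 0 ++ List.replicate (m+2) 1 ++
    List.replicate (n+1) 2 ++ List.replicate (m+1) 3

lemma step_a (n m : ℕ) : Step crossSerialSystem (form n m, 1) (aform n m, 2) := by
  refine ⟨(1, insRule [0] [0] [], 2), rule_mem1, rfl, rfl,
    fun _ => ⟨[], List.replicate n 0 ++ List.replicate (m+1) 1 ++
      List.replicate (n+1) 2 ++ List.replicate (m+1) 3, ?_, ?_⟩,
    fun h => by simp [insRule] at h⟩
  · simp [form, insRule, List.replicate_succ]
  · simp [aform, insRule, List.replicate_succ]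

lemma step_c (n m : ℕ) : Step crossSerialSystem (aform n m, 2) (form (n+1) m, 1) := by
  refine ⟨(2, insRule [2] [2] [], 1), rule_mem3, rfl, rfl,
    fun _ => ⟨List.replicate (n+2) 0 ++ List.replicate (m+1) 1,
      List.replicate n 2 ++ List.replicate (m+1) 3, ?_, ?_⟩,
    fun h => by simp [insRule] at h⟩
  · simp [aform, insRule, List.replicate_succ]
  · simp [form, insRule, List.replicate_succ]

lemma step_b (n m : ℕ) : Step crossSerialSystem (form n m, 1) (bform n m, 3) := by
  refine ⟨(1, insRule [1] [1] [], 3), rule_mem2, rfl, rfl,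
    fun _ => ⟨List.replicate (n+1) 0, List.replicate m 1 ++
      List.replicate (n+1) 2 ++ List.replicate (m+1) 3, ?_, ?_⟩,
    fun h => by simp [insRule] at h⟩
  · simp [form, insRule, List.replicate_succ]
  · simp [bform, insRule, List.replicate_succ]

lemma step_d (n m : ℕ) : Step crossSerialSystem (bform n m, 3) (form n (m+1), 1) := by
  refine ⟨(3, insRule [3] [3] [], 1), rule_mem4, rfl, rfl,
    fun _ => ⟨List.replicate (n+1) 0 ++ List.replicate (m+2) 1 ++ List.replicate (n+1) 2,
      List.replicate m 3, ?_, ?_⟩,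
    fun h => by simp [insRule] at h⟩
  · simp [bform, insRule, List.replicate_succ]
  · simp [form, insRule, List.replicate_succ]

lemma derives_form (n m : ℕ) :
    Derives crossSerialSystem ([0, 1, 2, 3], 1) (form n m, 1) := by
  induction n with
  | zero =>
    induction m with
    | zero =>
        have h : form 0 0 = [0, 1, 2, 3] := by decide
        exact h ▸ Relation.ReflTransGen.refl
    | succ m ihm => exact (ihm.tail (step_b 0 m)).tail (step_d 0 m)
  | succ n ihn => exact (ihn.tail (step_a n m)).tail (step_c n m)

/-- The system `crossSerialSystem` is star-controlled, generates exactly the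
cross-serial-dependency language `{ aⁿbᵐcⁿdᵐ : m, n ≥ 1 }`, and in particular
this language belongs to `GCID_S(3; 1, 1, 0; 0, 0, 0)`. -/
theorem crossSerialSystem_generates :
    StarControlled crossSerialSystem ∧
      language crossSerialSystem = crossSerialLang ∧
      crossSerialLang ∈ GCID_S 3 1 1 0 0 0 0 := by
  have hstar : StarControlled crossSerialSystem := by unfold StarControlled; decide
  have hlang : language crossSerialSystem = crossSerialLang := by
    ext w
    constructor
    · rintro ⟨hT, x, hx, f, hf, hder⟩
      have hx' : x = [0, 1, 2, 3] := by simpa [crossSerialSystem] using hx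
      have hf' : f = 1 := by simpa [crossSerialSystem] using hf
      subst hx' hf'
      have hinv : Inv (w, 1) :=
        inv_derives (Or.inl ⟨rfl, 0, 0, by decide⟩) hder
      rcases hinv with ⟨_, n, m, hform⟩ | ⟨hcomp, _⟩ | ⟨hcomp, _⟩
      · exact ⟨n + 1, m + 1, by omega, by omega, hform⟩
      · simp at hcomp
      · simp at hcomp
    · rintro ⟨n, m, hn, hm, rfl⟩
      obtain ⟨n', rfl⟩ : ∃ n', n = n' + 1 := ⟨n - 1, by omega⟩
      obtain ⟨m', rfl⟩ : ∃ m', m = m' + 1 := ⟨m - 1, by omega⟩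
      refine ⟨?_, [0, 1, 2, 3], by simp [crossSerialSystem], 1,
        by simp [crossSerialSystem], derives_form n' m'⟩
      intro a ha
      simp only [List.mem_append, List.mem_replicate] at ha
      have : a = 0 ∨ a = 1 ∨ a = 2 ∨ a = 3 := by tauto
      rcases this with rfl | rfl | rfl | rfl <;> decide
  refine ⟨hstar, hlang, crossSerialSystem, hstar, ⟨rfl, ?_⟩, hlang⟩
  intro q hq
  fin_cases hq <;> (unfold InsDelRule.SizeLE; decide)

end GCIDPaper
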